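/- Fix a real α > 1 and an integer n ≥ 3, and take a single processor (m = 1). Consider the instance with jobs J_1, …, J_n where, for 1 ≤ j ≤ n−1, job J_j has work w_j = 1, release date r_j = 2j−1 and deadline d_j = 2j, and job J_n has work w_n = n, release date r_n = 0 and deadline d_n = 2n−1. Then every feasible non-preemptive single-processor schedule for this instance has energy at least n·(n/3)^(α−1). Consequently the ratio of the minimum non-preemptive energy to the minimum preemptive energy for this instance is at least n^α / (3^(α−1)·(2n−1)), which grows as Θ(n^(α−1)). -/

import Mathlib

open MeasureTheory Set

/-- A feasible preemptive (migratory) schedule on `m` identical speed-scalable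
processors, for an instance given by jobs `ι` with works `w`, release dates `r` and
deadlines `d`: each job `j` gets a constant speed `speed j > 0` and, on each processor
`i`, a measurable set `A i j ⊆ [r j, d j]` of execution times; distinct jobs are
disjoint on each processor, a job never runs on two processors simultaneously, and the
total execution time times the speed equals the work. -/
structure PreemptiveSchedule (ι : Type) [Fintype ι] (m : ℕ) (w r d : ι → ℝ) where
  speed : ι → ℝ
  A : Fin m → ι → Set ℝ
  speed_pos : ∀ j, 0 < speed j
  measurableSet_A : ∀ i j, MeasurableSet (A i j)
  A_subset : ∀ i j, A i j ⊆ Icc (r j) (d j)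
  disjoint_jobs : ∀ i, ∀ j j', j ≠ j' → Disjoint (A i j) (A i j')
  disjoint_procs : ∀ j, ∀ i i', i ≠ i' → Disjoint (A i j) (A i' j)
  work_done : ∀ j, speed j * ∑ i, (volume (A i j)).toReal = w j

/-- The energy consumption of a preemptive schedule: each job `j` of work `w j` run at
constant speed `s_j` consumes energy `w j * s_j ^ (α - 1)`. -/
noncomputable def pEnergy {ι : Type} [Fintype ι] {m : ℕ} {w r d : ι → ℝ}
    (α : ℝ) (S : PreemptiveSchedule ι m w r d) : ℝ :=
  ∑ j, w j * S.speed j ^ (α - 1)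

/-- A feasible non-preemptive schedule on `m` identical speed-scalable processors:
each job `j` is assigned a processor `proc j`, a start time `start j ≥ r j` and a
processing time `len j > 0` with `start j + len j ≤ d j`, and the open execution
intervals of distinct jobs on the same processor are pairwise disjoint. -/
structure NPSchedule (ι : Type) [Fintype ι] (m : ℕ) (w r d : ι → ℝ) where
  proc : ι → Fin m
  start : ι → ℝ
  len : ι → ℝ
  len_pos : ∀ j, 0 < len j
  start_ge : ∀ j, r j ≤ start j
  end_le : ∀ j, start j + len j ≤ d j
  disjoint_jobs : ∀ j j', j ≠ j' → proc j = proc j' →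
    Disjoint (Set.Ioo (start j) (start j + len j)) (Set.Ioo (start j') (start j' + len j'))

/-- The energy consumption of a non-preemptive schedule: job `j` runs at constant speed
`w j / len j` and consumes energy `w j * (w j / len j) ^ (α - 1)`. -/
noncomputable def npEnergy {ι : Type} [Fintype ι] {m : ℕ} {w r d : ι → ℝ}
    (α : ℝ) (S : NPSchedule ι m w r d) : ℝ :=
  ∑ j, w j * (w j / S.len j) ^ (α - 1)
/-- The works of the hard instance: jobs `1, …, n-1` (represented by `j : Fin n` with
`j + 1 < n`) have unit work, and job `n` (with `j + 1 = n`) has work `n`. -/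
noncomputable def hardW (n : ℕ) (j : Fin n) : ℝ :=
  if (j : ℕ) + 1 = n then (n : ℝ) else 1

/-- The release dates of the hard instance: job `j` (for `1 ≤ j ≤ n-1`) is released at
time `2j - 1`, and job `n` is released at time `0`. -/
noncomputable def hardR (n : ℕ) (j : Fin n) : ℝ :=
  if (j : ℕ) + 1 = n then 0 else 2 * ((j : ℕ) + 1 : ℝ) - 1

/-- The deadlines of the hard instance: job `j` (for `1 ≤ j ≤ n-1`) has deadline `2j`,
and job `n` has deadline `2n - 1`. -/
noncomputable def hardD (n : ℕ) (j : Fin n) : ℝ :=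
  if (j : ℕ) + 1 = n then 2 * (n : ℝ) - 1 else 2 * ((j : ℕ) + 1 : ℝ)

section Aux

lemma hardW_nonneg (n : ℕ) (j : Fin n) : 0 ≤ hardW n j := by
  unfold hardW; split <;> [positivity; norm_num]

lemma ioo_ioo_disj {a b c d : ℝ} (h : b ≤ c ∨ d ≤ a) :
    Disjoint (Ioo a b) (Ioo c d) := by
  rw [Set.Ioo_disjoint_Ioo]
  rcases h with h | h
  · exact le_trans inf_le_left (le_trans h le_sup_right)
  · exact le_trans inf_le_right (le_trans h le_sup_left)

/-- Start times for the witness non-preemptive schedule. -/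
noncomputable def hardStart (n : ℕ) (j : Fin n) : ℝ :=
  if (j : ℕ) + 1 = n then 0 else 2 * ((j : ℕ) + 1 : ℝ) - 1

/-- Execution set for the witness preemptive schedule. -/
noncomputable def hardA (n : ℕ) (j : Fin n) : Set ℝ :=
  if (j : ℕ) + 1 = n then ⋃ k ∈ Finset.range n, Ioo (2 * (k : ℝ)) (2 * (k : ℝ) + 1)
  else Ioo (2 * ((j : ℕ) + 1 : ℝ) - 1) (2 * ((j : ℕ) + 1 : ℝ))

/-- The witness non-preemptive schedule: each small job `j` on `[2j-1,2j]`,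
the big job on `[0,1]`. -/
noncomputable def hardNPS (n : ℕ) (hn : 3 ≤ n) :
    NPSchedule (Fin n) 1 (hardW n) (hardR n) (hardD n) where
  proc _ := 0
  start := hardStart n
  len _ := 1
  len_pos _ := one_pos
  start_ge j := by
    unfold hardR hardStart
    split_ifs with h <;> exact le_rfl
  end_le j := by
    show hardStart n j + 1 ≤ hardD n j
    unfold hardD hardStart
    split_ifs with h
    · have : (3 : ℝ) ≤ (n : ℝ) := by exact_mod_cast hn
      linarith
    · exact le_of_eq (by ring)
  disjoint_jobs j j' hne _ := by
    show Disjoint (Ioo (hardStart n j) (hardStart n j + 1))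
      (Ioo (hardStart n j') (hardStart n j' + 1))
    apply ioo_ioo_disj
    unfold hardStart
    split_ifs with h1 h2 h2
    · exact absurd (Fin.ext (by omega)) hne
    · left
      have : (0 : ℝ) ≤ ((j' : ℕ) : ℝ) := Nat.cast_nonneg _
      linarith
    · right
      have : (0 : ℝ) ≤ ((j : ℕ) : ℝ) := Nat.cast_nonneg _
      linarith
    · have hne' : (j : ℕ) ≠ (j' : ℕ) := fun h => hne (Fin.ext h)
      rcases lt_or_gt_of_ne hne' with h | h
      · left
        have : ((j : ℕ) : ℝ) + 1 ≤ ((j' : ℕ) : ℝ) := by exact_mod_cast h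
        linarith
      · right
        have : ((j' : ℕ) : ℝ) + 1 ≤ ((j : ℕ) : ℝ) := by exact_mod_cast h
        linarith

/-- The witness preemptive schedule: everything at speed 1; each small job `j` on
`(2j-1,2j)`, and the big job on `(0,1) ∪ (2,3) ∪ ⋯ ∪ (2n-2,2n-1)`. -/
noncomputable def hardPS (n : ℕ) (hn : 3 ≤ n) :
    PreemptiveSchedule (Fin n) 1 (hardW n) (hardR n) (hardD n) where
  speed _ := 1
  A _ := hardA n
  speed_pos _ := one_pos
  measurableSet_A i j := by
    show MeasurableSet (hardA n j)
    unfold hardA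
    split
    · exact MeasurableSet.biUnion (Finset.range n).countable_toSet
        (fun _ _ => measurableSet_Ioo)
    · exact measurableSet_Ioo
  A_subset i j := by
    show hardA n j ⊆ Icc (hardR n j) (hardD n j)
    unfold hardA hardR hardD
    split_ifs with h
    · intro x hx
      simp only [mem_iUnion, Finset.mem_range, exists_prop] at hx
      obtain ⟨k, hk, h1, h2⟩ := hx
      have hk' : (k : ℝ) + 1 ≤ (n : ℝ) := by exact_mod_cast hk
      have hk0 : (0 : ℝ) ≤ (k : ℝ) := Nat.cast_nonneg k
      exact ⟨by linarith, by linarith⟩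
    · exact Ioo_subset_Icc_self
  disjoint_jobs i j j' hne := by
    show Disjoint (hardA n j) (hardA n j')
    unfold hardA
    split_ifs with h1 h2 h2
    · exact absurd (Fin.ext (by omega)) hne
    · rw [Set.disjoint_iUnion_left]
      intro k
      rw [Set.disjoint_iUnion_left]
      intro _
      apply ioo_ioo_disj
      rcases le_or_gt (k + 1) ((j' : ℕ) + 1) with h | h
      · left
        have : (k : ℝ) + 1 ≤ ((j' : ℕ) : ℝ) + 1 := by exact_mod_cast h
        linarith
      · right
        have : ((j' : ℕ) : ℝ) + 1 ≤ (k : ℝ) := by exact_mod_cast Nat.lt_succ_iff.mp h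
        linarith
    · rw [Set.disjoint_iUnion_right]
      intro k
      rw [Set.disjoint_iUnion_right]
      intro _
      apply ioo_ioo_disj
      rcases le_or_gt (k + 1) ((j : ℕ) + 1) with h | h
      · right
        have : (k : ℝ) + 1 ≤ ((j : ℕ) : ℝ) + 1 := by exact_mod_cast h
        linarith
      · left
        have : ((j : ℕ) : ℝ) + 1 ≤ (k : ℝ) := by exact_mod_cast Nat.lt_succ_iff.mp h
        linarith
    · apply ioo_ioo_disj
      have hne' : (j : ℕ) ≠ (j' : ℕ) := fun h => hne (Fin.ext h)
      rcases lt_or_gt_of_ne hne' with h | h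
      · left
        have : ((j : ℕ) : ℝ) + 1 ≤ ((j' : ℕ) : ℝ) := by exact_mod_cast h
        linarith
      · right
        have : ((j' : ℕ) : ℝ) + 1 ≤ ((j : ℕ) : ℝ) := by exact_mod_cast h
        linarith
  disjoint_procs j i i' h := absurd (Subsingleton.elim i i') h
  work_done j := by
    rw [Fin.sum_univ_one]
    show (1 : ℝ) * (volume (hardA n j)).toReal = hardW n j
    rw [one_mul]
    unfold hardA hardW
    split_ifs with h
    · rw [MeasureTheory.measure_biUnion_finset ?_ (fun _ _ => measurableSet_Ioo)]
      · have hvol : ∀ k ∈ Finset.range n,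
            volume (Ioo (2 * (k : ℝ)) (2 * (k : ℝ) + 1)) = 1 := by
          intro k _
          rw [Real.volume_Ioo]
          norm_num
        rw [Finset.sum_congr rfl hvol, Finset.sum_const, Finset.card_range]
        simp
      · intro a ha b hb hab
        show Disjoint (Ioo (2 * (a : ℝ)) (2 * (a : ℝ) + 1))
          (Ioo (2 * (b : ℝ)) (2 * (b : ℝ) + 1))
        apply ioo_ioo_disj
        rcases lt_or_gt_of_ne hab with hlt | hlt
        · left
          have : (a : ℝ) + 1 ≤ (b : ℝ) := by exact_mod_cast hlt
          linarith
        · right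
          have : (b : ℝ) + 1 ≤ (a : ℝ) := by exact_mod_cast hlt
          linarith
    · rw [Real.volume_Ioo,
        show 2 * (((j : ℕ) : ℝ) + 1) - (2 * (((j : ℕ) : ℝ) + 1) - 1) = 1 by ring]
      simp

lemma sum_hardW (n : ℕ) (hn : 3 ≤ n) : ∑ j : Fin n, hardW n j = 2 * (n : ℝ) - 1 := by
  have hNlt : n - 1 < n := by omega
  set N : Fin n := ⟨n - 1, hNlt⟩ with hN
  have key : ∀ j : Fin n, hardW n j = 1 + if j = N then (n : ℝ) - 1 else 0 := by
    intro j
    unfold hardW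
    have hiff : (j : ℕ) + 1 = n ↔ j = N := by
      rw [Fin.ext_iff]; simp only [hN]; omega
    split_ifs with h1 h2 h2
    · ring
    · exact absurd (hiff.mp h1) h2
    · exact absurd (hiff.mpr h2) h1
    · ring
  rw [Finset.sum_congr rfl (fun j _ => key j), Finset.sum_add_distrib,
    Finset.sum_const, Finset.sum_ite_eq' Finset.univ N (fun _ => (n : ℝ) - 1)]
  simp only [Finset.mem_univ, if_true, Finset.card_univ, Fintype.card_fin,
    nsmul_eq_mul, mul_one]
  ring

/-- Part 1: the non-preemptive lower bound. -/
lemma np_lower (α : ℝ) (hα : 1 < α) (n : ℕ) (hn : 3 ≤ n)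
    (S : NPSchedule (Fin n) 1 (hardW n) (hardR n) (hardD n)) :
    (n : ℝ) * ((n : ℝ) / 3) ^ (α - 1) ≤ npEnergy α S := by
  have hNlt : n - 1 < n := by omega
  set N : Fin n := ⟨n - 1, hNlt⟩ with hN
  have hNc : (N : ℕ) + 1 = n := by simp only [hN]; omega
  have hn0 : (0 : ℝ) < (n : ℝ) := by positivity
  -- the big job runs for at most 3 time units
  have hlen : S.len N ≤ 3 := by
    by_contra h
    push_neg at h
    have hσ0 : 0 ≤ S.start N := by
      have := S.start_ge N; rwa [hardR, if_pos hNc] at this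
    have hσe : S.start N + S.len N ≤ 2 * (n : ℝ) - 1 := by
      have := S.end_le N; rwa [hardD, if_pos hNc] at this
    have hk1 : 0 < ⌈(S.start N + 1) / 2⌉₊ := Nat.ceil_pos.mpr (by linarith)
    set k : ℕ := ⌈(S.start N + 1) / 2⌉₊ with hk
    have hkl : S.start N + 1 ≤ 2 * (k : ℝ) := by
      have := Nat.le_ceil ((S.start N + 1) / 2); rw [← hk] at this; linarith
    have hku : 2 * (k : ℝ) < S.start N + 3 := by
      have := Nat.ceil_lt_add_one (show (0 : ℝ) ≤ (S.start N + 1) / 2 by linarith)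
      rw [← hk] at this; linarith
    have hkn : k < n := by
      have h2 : (k : ℝ) < (n : ℝ) := by linarith
      exact_mod_cast h2
    set j : Fin n := ⟨k - 1, by omega⟩ with hj
    have hjk : ((j : ℕ) : ℝ) + 1 = (k : ℝ) := by
      have : (j : ℕ) + 1 = k := by simp only [hj]; omega
      exact_mod_cast this
    have hjc : ¬((j : ℕ) + 1 = n) := by
      have : (j : ℕ) + 1 = k := by simp only [hj]; omega
      omega
    have hne : j ≠ N := by
      intro hjn
      apply hjc
      rw [hjn]; exact hNc
    have hs := S.start_ge j
    rw [hardR, if_neg hjc] at hs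
    have he := S.end_le j
    rw [hardD, if_neg hjc] at he
    rw [hjk] at hs he
    have hlp := S.len_pos j
    have h1 : S.start j + S.len j / 2 ∈ Ioo (S.start j) (S.start j + S.len j) :=
      ⟨by linarith, by linarith⟩
    have h2 : S.start j + S.len j / 2 ∈ Ioo (S.start N) (S.start N + S.len N) :=
      ⟨by linarith, by linarith⟩
    exact Set.disjoint_left.mp
      (S.disjoint_jobs j N hne (Subsingleton.elim _ _)) h1 h2
  -- conclude
  have hterm : (n : ℝ) * ((n : ℝ) / 3) ^ (α - 1) ≤
      hardW n N * (hardW n N / S.len N) ^ (α - 1) := by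
    rw [hardW, if_pos hNc]
    apply mul_le_mul_of_nonneg_left _ hn0.le
    apply Real.rpow_le_rpow (by positivity)
      (div_le_div_of_nonneg_left hn0.le (S.len_pos N) hlen) (by linarith)
  refine le_trans hterm ?_
  unfold npEnergy
  refine Finset.single_le_sum
    (f := fun i => hardW n i * (hardW n i / S.len i) ^ (α - 1))
    (fun i _ => ?_) (Finset.mem_univ N)
  exact mul_nonneg (hardW_nonneg n i)
    (Real.rpow_nonneg (div_nonneg (hardW_nonneg n i) (S.len_pos i).le) _)

end Aux

/-- For the hard instance on a single processor with `n ≥ 3`, every feasible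
non-preemptive schedule has energy at least `n (n/3)^(α-1)`; consequently the ratio of
the minimum non-preemptive energy to the minimum preemptive energy is at least
`n^α / (3^(α-1) (2n-1))`. -/
theorem hard_instance_nonpreemptive_lower (α : ℝ) (hα : 1 < α) (n : ℕ) (hn : 3 ≤ n) :
    (∀ S : NPSchedule (Fin n) 1 (hardW n) (hardR n) (hardD n),
      (n : ℝ) * ((n : ℝ) / 3) ^ (α - 1) ≤ npEnergy α S) ∧
    ((n : ℝ) ^ α / (3 ^ (α - 1) * (2 * (n : ℝ) - 1))) *
        sInf {E | ∃ S : PreemptiveSchedule (Fin n) 1 (hardW n) (hardR n) (hardD n),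
          pEnergy α S = E} ≤
      sInf {E | ∃ S : NPSchedule (Fin n) 1 (hardW n) (hardR n) (hardD n),
          npEnergy α S = E} := by
  refine ⟨np_lower α hα n hn, ?_⟩
  have hn0 : (0 : ℝ) < (n : ℝ) := by positivity
  have hn3 : (3 : ℝ) ≤ (n : ℝ) := by exact_mod_cast hn
  have h3 : (0 : ℝ) < (3 : ℝ) ^ (α - 1) := Real.rpow_pos_of_pos (by norm_num) _
  have h2n : (0 : ℝ) < 2 * (n : ℝ) - 1 := by linarith
  set c : ℝ := (n : ℝ) ^ α / (3 ^ (α - 1) * (2 * (n : ℝ) - 1)) with hc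
  have hc0 : 0 ≤ c := by positivity
  -- the preemptive infimum is at most 2n - 1
  have hpEn : pEnergy α (hardPS n hn) = 2 * (n : ℝ) - 1 := by
    unfold pEnergy
    have hs1 : (hardPS n hn).speed = fun _ => (1 : ℝ) := rfl
    have : ∀ j : Fin n, hardW n j * (hardPS n hn).speed j ^ (α - 1) = hardW n j := by
      intro j
      rw [hs1, Real.one_rpow, mul_one]
    rw [Finset.sum_congr rfl (fun j _ => this j)]
    exact sum_hardW n hn
  have hPinf : sInf {E | ∃ S : PreemptiveSchedule (Fin n) 1 (hardW n) (hardR n) (hardD n),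
      pEnergy α S = E} ≤ 2 * (n : ℝ) - 1 := by
    apply csInf_le
    · refine ⟨0, ?_⟩
      rintro E ⟨S, rfl⟩
      apply Finset.sum_nonneg
      intro j _
      exact mul_nonneg (hardW_nonneg n j) (Real.rpow_nonneg (S.speed_pos j).le _)
    · exact ⟨hardPS n hn, hpEn⟩
  -- the non-preemptive infimum is at least n (n/3)^(α-1)
  have hNPinf : (n : ℝ) * ((n : ℝ) / 3) ^ (α - 1) ≤
      sInf {E | ∃ S : NPSchedule (Fin n) 1 (hardW n) (hardR n) (hardD n),
        npEnergy α S = E} := by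
    have hnem : Set.Nonempty {E | ∃ S : NPSchedule (Fin n) 1 (hardW n) (hardR n) (hardD n),
        npEnergy α S = E} := ⟨npEnergy α (hardNPS n hn), hardNPS n hn, rfl⟩
    apply le_csInf hnem
    rintro E ⟨S, rfl⟩
    exact np_lower α hα n hn S
  -- the algebra connecting the two
  have hkey : c * (2 * (n : ℝ) - 1) = (n : ℝ) * ((n : ℝ) / 3) ^ (α - 1) := by
    rw [hc, Real.div_rpow hn0.le (by norm_num : (0 : ℝ) ≤ 3)]
    have hα' : (n : ℝ) ^ α = (n : ℝ) * (n : ℝ) ^ (α - 1) := by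
      rw [show α = 1 + (α - 1) by ring, Real.rpow_add hn0, Real.rpow_one]
      ring_nf
    rw [hα']
    field_simp
    exact div_self (by linarith)
  calc c * sInf {E | ∃ S : PreemptiveSchedule (Fin n) 1 (hardW n) (hardR n) (hardD n),
        pEnergy α S = E}
      ≤ c * (2 * (n : ℝ) - 1) := mul_le_mul_of_nonneg_left hPinf hc0
    _ = (n : ℝ) * ((n : ℝ) / 3) ^ (α - 1) := hkey
    _ ≤ _ := hNPinf
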